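/- The function ψ(x) = (√2·x² + 1)·exp(−x⁴/4) satisfies the Schrödinger equation −ψ'' + (x⁶ − 7x²)ψ = λψ with eigenvalue λ = −2√2. -/

import Mathlib

open Real

private lemma exp_deriv (x : ℝ) :
    HasDerivAt (fun y : ℝ => Real.exp (-y ^ 4 / 4)) (-x ^ 3 * Real.exp (-x ^ 4 / 4)) x := by
  have h : HasDerivAt (fun y : ℝ => -y ^ 4 / 4) (-x ^ 3) x := by
    have := (hasDerivAt_pow 4 x).neg.div_const 4
    exact this.congr_deriv (by norm_num; ring)
  have := h.exp
  exact this.congr_deriv (by ring)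

private lemma psi_deriv (x : ℝ) :
    HasDerivAt (fun y : ℝ => (Real.sqrt 2 * y ^ 2 + 1) * Real.exp (-y ^ 4 / 4))
      ((2 * Real.sqrt 2 * x - Real.sqrt 2 * x ^ 5 - x ^ 3) * Real.exp (-x ^ 4 / 4)) x := by
  have h1 : HasDerivAt (fun y : ℝ => Real.sqrt 2 * y ^ 2 + 1) (2 * Real.sqrt 2 * x) x := by
    have := ((hasDerivAt_pow 2 x).const_mul (Real.sqrt 2)).add_const 1
    exact this.congr_deriv (by norm_num; ring)
  have := h1.mul (exp_deriv x)
  exact this.congr_deriv (by ring)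

private lemma psi_deriv' (x : ℝ) :
    deriv (fun y : ℝ => (Real.sqrt 2 * y ^ 2 + 1) * Real.exp (-y ^ 4 / 4)) x
      = (2 * Real.sqrt 2 * x - Real.sqrt 2 * x ^ 5 - x ^ 3) * Real.exp (-x ^ 4 / 4) :=
  (psi_deriv x).deriv

private lemma psi_deriv2 (x : ℝ) :
    HasDerivAt (fun y : ℝ => (2 * Real.sqrt 2 * y - Real.sqrt 2 * y ^ 5 - y ^ 3) * Real.exp (-y ^ 4 / 4))
      ((2 * Real.sqrt 2 - 3 * x ^ 2 - 7 * Real.sqrt 2 * x ^ 4 + x ^ 6 + Real.sqrt 2 * x ^ 8)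
        * Real.exp (-x ^ 4 / 4)) x := by
  have h1 : HasDerivAt (fun y : ℝ => 2 * Real.sqrt 2 * y - Real.sqrt 2 * y ^ 5 - y ^ 3)
      (2 * Real.sqrt 2 - 5 * Real.sqrt 2 * x ^ 4 - 3 * x ^ 2) x := by
    have ha : HasDerivAt (fun y : ℝ => 2 * Real.sqrt 2 * y) (2 * Real.sqrt 2) x := by
      simpa using (hasDerivAt_id x).const_mul (2 * Real.sqrt 2)
    have hb : HasDerivAt (fun y : ℝ => Real.sqrt 2 * y ^ 5) (Real.sqrt 2 * (5 * x ^ 4)) x := by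
      simpa using (hasDerivAt_pow 5 x).const_mul (Real.sqrt 2)
    have hc : HasDerivAt (fun y : ℝ => y ^ 3) (3 * x ^ 2) x := by
      simpa using hasDerivAt_pow 3 x
    have := (ha.sub hb).sub hc
    exact this.congr_deriv (by norm_num; ring)
  have := h1.mul (exp_deriv x)
  exact this.congr_deriv (by ring)

theorem stmt0 :
    ∀ x : ℝ,
      -(deriv (deriv (fun y : ℝ => (Real.sqrt 2 * y ^ 2 + 1) * Real.exp (-y ^ 4 / 4))) x)
        + (x ^ 6 - 7 * x ^ 2) * ((Real.sqrt 2 * x ^ 2 + 1) * Real.exp (-x ^ 4 / 4))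
      = (-2 * Real.sqrt 2) * ((Real.sqrt 2 * x ^ 2 + 1) * Real.exp (-x ^ 4 / 4)) := by
  intro x
  have hd : deriv (fun y : ℝ => (Real.sqrt 2 * y ^ 2 + 1) * Real.exp (-y ^ 4 / 4))
      = fun y => (2 * Real.sqrt 2 * y - Real.sqrt 2 * y ^ 5 - y ^ 3) * Real.exp (-y ^ 4 / 4) :=
    funext psi_deriv'
  rw [hd, (psi_deriv2 x).deriv]
  have h2 : Real.sqrt 2 * Real.sqrt 2 = 2 := Real.mul_self_sqrt (by norm_num)
  linear_combination (2 * x ^ 2 * Real.exp (-x ^ 4 / 4)) * h2
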